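/- arXiv:2104.14669 — 2 statements merged into one kernel-verified Lean document; each statement's English description precedes it below -/
import Mathlib

section
/- Lemma (gsd step, case d = 1): if x ∈ [-1,1], x ≥ 0, and (a :: b :: tq) is a Gray code of x, then ((not b) :: tq) is a Gray code of 2x - 1, where 'not' swaps L and R. -/
/-- Gray-code digits: `none` is ⊥, `some false` is L, `some true` is R. -/
abbrev GDigit := Option Bool

def RD (a : GDigit) (x : ℝ) : Prop :=
  (x < 0 ∧ a = some false) ∨ (x > 0 ∧ a = some true) ∨ x = 0

/-- `GrayRel q x`: `x` has infinite Gray code `q`, defined as the greatest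
relation satisfying the unfolding
`R(a::q, x) ↔ -1 ≤ x ≤ 1 ∧ R_D(a,x) ∧ R(q, 1 - 2|x|)`. -/
def GrayRel (q : ℕ → GDigit) (x : ℝ) : Prop :=
  ∃ R : (ℕ → GDigit) → ℝ → Prop,
    (∀ q x, R q x →
      -1 ≤ x ∧ x ≤ 1 ∧ RD (q 0) x ∧ R (fun i => q (i + 1)) (1 - 2 * |x|)) ∧
    R q x

def consD (a : GDigit) (s : ℕ → GDigit) : ℕ → GDigit :=
  fun n => match n with | 0 => a | n + 1 => s n

def notD : GDigit → GDigit
  | none => none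
  | some b => some (!b)

lemma GrayRel.dest {q : ℕ → GDigit} {x : ℝ} (h : GrayRel q x) :
    -1 ≤ x ∧ x ≤ 1 ∧ RD (q 0) x ∧ GrayRel (fun i => q (i + 1)) (1 - 2 * |x|) := by
  obtain ⟨R, hR, hqx⟩ := h
  obtain ⟨a, b, c, d⟩ := hR q x hqx
  exact ⟨a, b, c, R, hR, d⟩

lemma GrayRel.cons {a : GDigit} {s : ℕ → GDigit} {x : ℝ}
    (h1 : -1 ≤ x) (h2 : x ≤ 1) (hrd : RD a x) (hs : GrayRel s (1 - 2 * |x|)) :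
    GrayRel (consD a s) x := by
  refine ⟨fun q' x' => GrayRel q' x' ∨ (q' = consD a s ∧ x' = x), ?_, Or.inr ⟨rfl, rfl⟩⟩
  rintro q' x' (hg | ⟨rfl, rfl⟩)
  · obtain ⟨ha, hb, hc, hd⟩ := hg.dest
    exact ⟨ha, hb, hc, Or.inl hd⟩
  · exact ⟨h1, h2, hrd, Or.inl hs⟩

theorem gsd_step_one (x : ℝ) (q : ℕ → GDigit)
    (h1 : -1 ≤ x) (h2 : x ≤ 1) (hx : 0 ≤ x)
    (hg : GrayRel q x) :
    GrayRel (consD (notD (q 1)) (fun i => q (i + 2))) (2 * x - 1) := by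
  obtain ⟨_, _, _, hg1⟩ := hg.dest
  rw [abs_of_nonneg hx] at hg1
  obtain ⟨ha, hb, hc, hd⟩ := hg1.dest
  set y := 1 - 2 * x with hy
  have hxy : 2 * x - 1 = -y := by rw [hy]; ring
  rw [hxy]
  apply GrayRel.cons (by linarith) (by linarith)
  · rcases hc with ⟨h, he⟩ | ⟨h, he⟩ | h
    · exact Or.inr (Or.inl ⟨by linarith, by rw [he]; rfl⟩)
    · exact Or.inl ⟨by linarith, by rw [he]; rfl⟩
    · exact Or.inr (Or.inr (by rw [h]; ring))
  · have : 1 - 2 * |(-y)| = 1 - 2 * |y| := by rw [abs_neg]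
    rw [this]
    exact hd
end

section
/- Main theorem (semantic form of G ⊆ S₂): every real x that has an infinite Gray code in the coinductive sense (there exists a digit stream q with R_G(q,x)) has a signed digit representation: there exists p : ℕ → {-1,0,1} with x = Σ_{i=0}^∞ p_i · 2^{-(i+1)}. -/
noncomputable def sdDig (y : ℝ) : ℤ :=
  if 1/2 ≤ y then 1 else if y ≤ -(1/2) then -1 else 0

noncomputable def sdSeq (x : ℝ) : ℕ → ℝ
  | 0 => x
  | n + 1 => 2 * sdSeq x n - sdDig (sdSeq x n)

lemma sdDig_cases (y : ℝ) : sdDig y = -1 ∨ sdDig y = 0 ∨ sdDig y = 1 := by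
  unfold sdDig; split_ifs <;> simp

lemma sdSeq_mem (x : ℝ) (hx : -1 ≤ x ∧ x ≤ 1) :
    ∀ n, -1 ≤ sdSeq x n ∧ sdSeq x n ≤ 1 := by
  intro n
  induction n with
  | zero => exact hx
  | succ n ih =>
    simp only [sdSeq]
    unfold sdDig
    split_ifs with h1 h2 <;> push_cast <;> constructor <;> linarith [ih.1, ih.2]

lemma sdSeq_sum (x : ℝ) :
    ∀ n, ∑ i ∈ Finset.range n, (sdDig (sdSeq x i) : ℝ) / 2 ^ (i + 1)
      = x - sdSeq x n / 2 ^ n := by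
  intro n
  induction n with
  | zero => simp [sdSeq]
  | succ n ih =>
    rw [Finset.sum_range_succ, ih]
    have : sdSeq x (n + 1) = 2 * sdSeq x n - sdDig (sdSeq x n) := rfl
    rw [this]
    have h2 : (2:ℝ) ^ (n+1) = 2 * 2 ^ n := by ring
    field_simp
    ring

theorem gray_subset_signed_digit (x : ℝ) (h : ∃ q : ℕ → GDigit, GrayRel q x) :
    ∃ p : ℕ → ℤ, (∀ i, p i = -1 ∨ p i = 0 ∨ p i = 1) ∧
      x = ∑' i : ℕ, (p i : ℝ) / 2 ^ (i + 1) := by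
  obtain ⟨q, R, hR, hqx⟩ := h
  obtain ⟨hx1, hx2, -, -⟩ := hR q x hqx
  refine ⟨fun i => sdDig (sdSeq x i), fun i => sdDig_cases _, ?_⟩
  set f : ℕ → ℝ := fun i => (sdDig (sdSeq x i) : ℝ) / 2 ^ (i + 1) with hf
  have hb : ∀ i, ‖f i‖ ≤ (1/2) * (1/2) ^ i := by
    intro i
    have h1 : |(sdDig (sdSeq x i) : ℝ)| ≤ 1 := by
      rcases sdDig_cases (sdSeq x i) with h | h | h <;> rw [h] <;> norm_num
    have h2 : (0:ℝ) < 2 ^ (i+1) := by positivity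
    rw [hf]
    simp only [Real.norm_eq_abs, abs_div, abs_pow, abs_two]
    rw [div_le_iff₀ h2]
    calc |(sdDig (sdSeq x i) : ℝ)| ≤ 1 := h1
      _ = 1/2 * (1/2)^i * 2^(i+1) := by
          rw [div_pow, one_pow]
          field_simp
          ring
  have hs : Summable f :=
    Summable.of_norm_bounded ((summable_geometric_two).mul_left _) hb
  have h1 : Filter.Tendsto (fun n => ∑ i ∈ Finset.range n, f i)
      Filter.atTop (nhds (∑' i, f i)) := hs.hasSum.tendsto_sum_nat
  have h2 : Filter.Tendsto (fun n => ∑ i ∈ Finset.range n, f i)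
      Filter.atTop (nhds x) := by
    have heq : (fun n => ∑ i ∈ Finset.range n, f i)
        = fun n => x - sdSeq x n / 2 ^ n := by
      funext n; exact sdSeq_sum x n
    rw [heq]
    have : Filter.Tendsto (fun n : ℕ => sdSeq x n / 2 ^ n) Filter.atTop (nhds 0) := by
      have hg : Filter.Tendsto (fun n : ℕ => (1/2:ℝ) ^ n) Filter.atTop (nhds 0) :=
        tendsto_pow_atTop_nhds_zero_of_lt_one (by norm_num) (by norm_num)
      apply squeeze_zero_norm (fun n => ?_) hg
      have h2 : (0:ℝ) < 2 ^ n := by positivity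
      have hm := sdSeq_mem x ⟨hx1, hx2⟩ n
      have h3 : |sdSeq x n| ≤ 1 := abs_le.mpr hm
      rw [Real.norm_eq_abs, abs_div, abs_pow, abs_two, div_pow, one_pow,
        div_le_div_iff₀ h2 h2]
      nlinarith
    have := Filter.Tendsto.const_sub x this
    simpa using this
  exact tendsto_nhds_unique h2 h1
end
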